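/- For all Δ, x, y with x + 1 + (y + x) ≤ Δ, the containment B_Δ(x,y) ⊆ B_Δ(x+1, y+x) holds. -/
import Mathlib


inductive Lbl : Type
  | M | P | O | X
deriving DecidableEq

open Lbl

/-- The set of multisets of `k` symbols, each drawn from `S`. -/
def FromSet (S : Set Lbl) (k : ℕ) : Set (Multiset Lbl) :=
  {m | Multiset.card m = k ∧ ∀ s ∈ m, s ∈ S}

/-- Concatenation of two pattern sets of multisets. -/
def concatP (A B : Set (Multiset Lbl)) : Set (Multiset Lbl) :=
  {m | ∃ a ∈ A, ∃ b ∈ B, m = a + b}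

/-- `B_Δ(x,y)`: multisets matching `([MX][POX]^{d-1} | [OX]^d)[POX]^y[MPOX]^x`, `d = Δ-x-y`. -/
def Bset (Δ x y : ℕ) : Set (Multiset Lbl) :=
  concatP (concatP ((concatP (FromSet {M, X} 1) (FromSet {P, O, X} (Δ - x - y - 1))) ∪
      FromSet {O, X} (Δ - x - y)) (FromSet {P, O, X} y)) (FromSet Set.univ x)

/-- `W_Δ(x,y)`: multisets matching `(M O^{d-1} | P^d) O^y X^x`, `d = Δ-x-y`. -/
def Wset (Δ x y : ℕ) : Set (Multiset Lbl) :=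
  concatP (concatP ((concatP (FromSet {M} 1) (FromSet {O} (Δ - x - y - 1))) ∪
      FromSet {P} (Δ - x - y)) (FromSet {O} y)) (FromSet {X} x)

lemma msplit (b : Multiset Lbl) (k : ℕ) (hk : k ≤ Multiset.card b) :
    ∃ b1 b2, b = b1 + b2 ∧ Multiset.card b1 = k := by
  obtain ⟨l, rfl⟩ : ∃ l : List Lbl, (l : Multiset Lbl) = b := ⟨b.toList, b.coe_toList⟩
  refine ⟨l.take k, l.drop k, by exact_mod_cast congrArg (fun t : List Lbl => (t : Multiset Lbl)) (l.take_append_drop k).symm, ?_⟩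
  simp only [Multiset.coe_card, List.length_take]
  simp only [Multiset.coe_card] at hk
  omega

theorem stmt_3 (Δ x y : ℕ) (h : x + 1 + (y + x) ≤ Δ) :
    Bset Δ x y ⊆ Bset Δ (x + 1) (y + x) := by
  rintro m ⟨hd, ⟨head, hhead, p, hp, rfl⟩, u, hu, rfl⟩
  rcases hhead with ⟨a, ha, b, hb, rfl⟩ | hhead
  · -- head = a + b with a ∈ [MX], b ∈ [POX]^{d-1}
    by_cases hd0 : Δ - (x + 1) - (y + x) = 0
    · -- degenerate: d' = 0, so card b = Δ - x - y - 1 = x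
      refine ⟨0 + (p + b), ⟨0, Or.inr ⟨by simp [hd0], by simp⟩, p + b, ⟨?_, ?_⟩, rfl⟩,
        a + u, ⟨?_, fun s _ => Set.mem_univ s⟩, ?_⟩
      · simp [hp.1, hb.1]; omega
      · intro s hs
        rcases Multiset.mem_add.1 hs with hs | hs
        exacts [hp.2 s hs, hb.2 s hs]
      · simp [ha.1, hu.1]; omega
      · simp only [zero_add]
        rw [show a + b + p + u = p + b + (a + u) by abel]
    · -- d' ≥ 1 : split b
      obtain ⟨b1, b2, rfl, hb1⟩ := msplit b (Δ - (x + 1) - (y + x) - 1) (by rw [hb.1]; omega)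
      obtain ⟨c1, c2, rfl, hc1⟩ := msplit b2 x (by
        have := hb.1
        rw [Multiset.card_add, hb1] at this
        omega)
      have hcard := hb.1
      rw [Multiset.card_add, Multiset.card_add, hb1, hc1] at hcard
      refine ⟨(a + b1) + (p + c1), ⟨a + b1, Or.inl ⟨a, ha, b1, ⟨hb1, fun s hs =>
          hb.2 s (by simp [hs])⟩, rfl⟩, p + c1, ⟨?_, ?_⟩, rfl⟩,
        u + c2, ⟨?_, fun s _ => Set.mem_univ s⟩, ?_⟩
      · simp [hp.1, hc1]
      · intro s hs
        rcases Multiset.mem_add.1 hs with hs | hs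
        exacts [hp.2 s hs, hb.2 s (by simp [hs])]
      · simp [hu.1]; omega
      · rw [show a + (b1 + (c1 + c2)) + p + u = a + b1 + (p + c1) + (u + c2) by abel]
  · -- head ∈ [OX]^d : split head
    obtain ⟨h1, c, rfl, hh1⟩ := msplit head (Δ - (x + 1) - (y + x)) (by rw [hhead.1]; omega)
    obtain ⟨c1, c2, rfl, hc1⟩ := msplit c x (by
      have := hhead.1
      rw [Multiset.card_add, hh1] at this
      omega)
    have hcard := hhead.1
    rw [Multiset.card_add, Multiset.card_add, hh1, hc1] at hcard
    refine ⟨h1 + (p + c1), ⟨h1, Or.inr ⟨hh1, fun s hs => hhead.2 s (by simp [hs])⟩,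
        p + c1, ⟨?_, ?_⟩, rfl⟩, u + c2, ⟨?_, fun s _ => Set.mem_univ s⟩, ?_⟩
    · simp [hp.1, hc1]
    · intro s hs
      rcases Multiset.mem_add.1 hs with hs | hs
      · exact hp.2 s hs
      · have := hhead.2 s (by simp [hs])
        rcases this with h | h <;> simp [h]
    · simp [hu.1]; omega
    · rw [show h1 + (c1 + c2) + p + u = h1 + (p + c1) + (u + c2) by abel]
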